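/- Let n be even and let S = conv{p¹, …, p^{n+1}} ⊂ ℝ^n be a regular n-simplex with vertices satisfying ‖pⁱ‖ = 1 for all i, p¹ + … + p^{n+1} = 0, and (pⁱ)ᵀpʲ = −1/n for all i ≠ j. Then ((S° − S°)/2)° is optimally contained in (n(n+2)/(n+1)²)·((S − S)/2). -/

import Mathlib

open Pointwise RealInnerProductSpace

variable {E : Type*} [NormedAddCommGroup E] [InnerProductSpace ℝ E]

/-- `K` is optimally contained in `C`: `K ⊆ C` and there is no `ρ ∈ [0,1)` and
translation `t` with `K ⊆ ρ • C + {t}`. -/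
def OptCont (K C : Set E) : Prop :=
  K ⊆ C ∧ ¬∃ ρ : ℝ, 0 ≤ ρ ∧ ρ < 1 ∧ ∃ t : E, K ⊆ ρ • C + {t}

/-- The polar set `C° = {a | ∀ x ∈ C, ⟪a,x⟫ ≤ 1}`. -/
def polarSet (C : Set E) : Set E := {a : E | ∀ x ∈ C, ⟪a, x⟫ ≤ 1}

/-- The Minkowski asymmetry of `C`. -/
noncomputable def minkAsym (C : Set E) : ℝ :=
  sInf {ρ : ℝ | 0 < ρ ∧ ∃ c : E, C - {c} ⊆ ρ • ({c} - C)}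

/-- `C` is Minkowski centered if `C ⊆ s(C) • (-C)`. -/
def MinkCentered (C : Set E) : Prop := C ⊆ minkAsym C • (-C)

lemma aux_comb_bound {n : ℕ} (hn : Even n) (hn0 : 0 < n) (t : Fin (n+1) → ℝ)
    (hsum : ∑ i, t i = 0) (hrange : ∀ i j, t i - t j ≤ 2 / n) :
    ∑ i, max (t i) 0 ≤ ((n:ℝ)+2)/(2*((n:ℝ)+1)) := by
  classical
  have hnR : (0:ℝ) < n := by exact_mod_cast hn0
  set A := Finset.univ.filter (fun i : Fin (n+1) => 0 < t i) with hA
  set B := Finset.univ.filter (fun i : Fin (n+1) => ¬ 0 < t i) with hB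
  have hcard : A.card + B.card = n+1 := by
    have h := Finset.card_filter_add_card_filter_not
      (s := (Finset.univ : Finset (Fin (n+1)))) (p := fun i => 0 < t i)
    simp only [Finset.card_univ, Fintype.card_fin] at h
    rw [hA, hB]; exact h
  have hPmax : ∑ i, max (t i) 0 = ∑ i ∈ A, t i := by
    rw [← Finset.sum_filter_add_sum_filter_not Finset.univ (fun i => 0 < t i)
      (fun i => max (t i) 0)]
    have h1 : ∑ i ∈ A, max (t i) 0 = ∑ i ∈ A, t i :=
      Finset.sum_congr rfl fun i hi => by
        rw [hA] at hi; simp only [Finset.mem_filter] at hi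
        exact max_eq_left hi.2.le
    have h2 : ∑ i ∈ B, max (t i) 0 = 0 :=
      Finset.sum_eq_zero fun i hi => by
        rw [hB] at hi; simp only [Finset.mem_filter] at hi
        exact max_eq_right (by linarith [not_lt.mp hi.2])
    rw [h1, h2, add_zero]
  have hAB : ∑ i ∈ A, t i + ∑ i ∈ B, t i = 0 := by
    rw [Finset.sum_filter_add_sum_filter_not]; exact hsum
  set P := ∑ i ∈ A, t i with hP
  have hdouble : ∑ i ∈ A, ∑ j ∈ B, (t i - t j) = ((n:ℝ)+1) * P := by
    have : ∑ i ∈ A, ∑ j ∈ B, (t i - t j)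
        = ∑ i ∈ A, ((B.card : ℝ) * t i - ∑ j ∈ B, t j) := by
      refine Finset.sum_congr rfl fun i _ => ?_
      rw [Finset.sum_sub_distrib, Finset.sum_const, nsmul_eq_mul]
    rw [this, Finset.sum_sub_distrib, ← Finset.mul_sum, Finset.sum_const, nsmul_eq_mul]
    have hBt : ∑ j ∈ B, t j = -P := by linarith
    rw [hBt, ← hP]
    have h : ((A.card : ℝ) + B.card) = (n:ℝ)+1 := by exact_mod_cast hcard
    linear_combination P * h
  have hbound : ∑ i ∈ A, ∑ j ∈ B, (t i - t j) ≤ (A.card : ℝ) * B.card * (2/n) := by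
    calc ∑ i ∈ A, ∑ j ∈ B, (t i - t j) ≤ ∑ i ∈ A, ∑ j ∈ B, (2/(n:ℝ)) :=
          Finset.sum_le_sum fun i _ => Finset.sum_le_sum fun j _ => hrange i j
      _ = (A.card : ℝ) * B.card * (2/n) := by
          simp [Finset.sum_const, nsmul_eq_mul]; ring
  have hkm : (A.card:ℝ) * B.card ≤ (n:ℝ)*((n:ℝ)+2)/4 := by
    have hmcard : (B.card : ℝ) = (n:ℝ) + 1 - A.card := by
      have : ((A.card : ℝ) + B.card) = (n:ℝ)+1 := by exact_mod_cast hcard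
      linarith
    have hodd : Odd (2*(A.card:ℤ) - ((n:ℤ)+1)) := by
      obtain ⟨r, hr⟩ := hn
      refine ⟨(A.card:ℤ) - r - 1, by omega⟩
    have hne : (2*(A.card:ℤ) - ((n:ℤ)+1)) ≠ 0 := by
      intro h; rw [h] at hodd; exact (Int.not_odd_iff_even.mpr Even.zero) hodd
    have hsq : (1:ℤ) ≤ (2*(A.card:ℤ) - ((n:ℤ)+1))^2 := by
      have h1 := Int.one_le_abs hne
      nlinarith [sq_abs (2*(A.card:ℤ) - ((n:ℤ)+1)), abs_nonneg (2*(A.card:ℤ) - ((n:ℤ)+1))]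
    have hsqR : (1:ℝ) ≤ (2*(A.card:ℝ) - ((n:ℝ)+1))^2 := by exact_mod_cast hsq
    rw [hmcard]
    nlinarith [hsqR]
  rw [hPmax]
  have hfinal : ((n:ℝ)+1) * P ≤ ((n:ℝ)+2)/2 := by
    rw [← hdouble]
    calc ∑ i ∈ A, ∑ j ∈ B, (t i - t j) ≤ (A.card : ℝ) * B.card * (2/n) := hbound
      _ ≤ ((n:ℝ)*((n:ℝ)+2)/4) * (2/n) := by
          apply mul_le_mul_of_nonneg_right hkm; positivity
      _ = ((n:ℝ)+2)/2 := by field_simp; ring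
  rw [le_div_iff₀ (by positivity : (0:ℝ) < 2*((n:ℝ)+1))]
  nlinarith [hfinal]

set_option maxHeartbeats 2000000 in
theorem stmt_18 {n : ℕ} (hn : Even n) (p : Fin (n + 1) → EuclideanSpace ℝ (Fin n))
    (hnorm : ∀ i, ‖p i‖ = 1) (hsum : ∑ i, p i = 0)
    (hip : ∀ i j, i ≠ j → (⟪p i, p j⟫ : ℝ) = -1 / n)
    (S : Set (EuclideanSpace ℝ (Fin n))) (hS : S = convexHull ℝ (Set.range p)) :
    OptCont (polarSet ((2:ℝ)⁻¹ • (polarSet S + -polarSet S)))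
      (((n : ℝ) * (n + 2) / (n + 1)^2) • ((2:ℝ)⁻¹ • (S + -S))) := by
  classical
  rcases Nat.eq_zero_or_pos n with h0 | hn0
  · exfalso
    subst h0
    have h1 := hnorm 0
    have h2 : p 0 = 0 := by
      ext i
      exact absurd i.2 (by omega)
    rw [h2] at h1
    simp at h1
  have hnR : (0:ℝ) < n := by exact_mod_cast hn0
  have hnne : (n:ℝ) ≠ 0 := ne_of_gt hnR
  have hn1 : (0:ℝ) < (n:ℝ)+1 := by linarith
  have hn1ne : ((n:ℝ)+1) ≠ 0 := ne_of_gt hn1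
  have hii : ∀ i, (⟪p i, p i⟫:ℝ) = 1 := fun i => by
    rw [real_inner_self_eq_norm_sq, hnorm i]; norm_num
  -- core inner product computation
  have core : ∀ (g : Fin (n+1) → ℝ) (j : Fin (n+1)),
      (⟪∑ i, g i • p i, p j⟫ : ℝ) = g j * (1 + 1/n) - (∑ i, g i)/n := by
    intro g j
    rw [sum_inner]
    have h1 : ∀ i : Fin (n+1), (⟪g i • p i, p j⟫:ℝ)
        = g i * (-1/n) + (if i = j then g j * (1 + 1/n) else 0) := by
      intro i
      rw [real_inner_smul_left]
      by_cases h : i = j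
      · subst h; rw [hii i, if_pos rfl]; ring
      · rw [hip i j h]; simp [h]
    simp_rw [h1]
    rw [Finset.sum_add_distrib, ← Finset.sum_mul, Finset.sum_ite_eq' Finset.univ j]
    simp
    ring
  have tsum0 : ∀ a : EuclideanSpace ℝ (Fin n), ∑ i, (⟪a, p i⟫:ℝ) = 0 := fun a => by
    rw [← inner_sum, hsum, inner_zero_right]
  -- linear independence of first n vertices
  have hli : LinearIndependent ℝ (fun i : Fin n => p i.castSucc) := by
    rw [Fintype.linearIndependent_iff]
    intro g hg
    have hinner : ∀ j : Fin n, g j * (1 + 1/n) - (∑ i, g i)/n = 0 := by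
      intro j
      have h0 : (⟪∑ i : Fin n, g i • p i.castSucc, p j.castSucc⟫:ℝ) = 0 := by
        rw [hg, inner_zero_left]
      rw [sum_inner] at h0
      have h1 : ∀ i : Fin n, (⟪g i • p i.castSucc, p j.castSucc⟫:ℝ)
          = g i * (-1/n) + (if i = j then g j * (1 + 1/n) else 0) := by
        intro i
        rw [real_inner_smul_left]
        by_cases h : i = j
        · subst h; rw [hii, if_pos rfl]; ring
        · rw [hip _ _ (by simp [Fin.castSucc_inj, h])]; simp [h]
      simp_rw [h1] at h0
      rw [Finset.sum_add_distrib, ← Finset.sum_mul, Finset.sum_ite_eq' Finset.univ j] at h0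
      simp at h0
      linear_combination h0
    have hGsum : ∑ i, g i = 0 := by
      have h2 : ∀ j : Fin n, g j = (∑ i, g i) / ((n:ℝ)+1) := by
        intro j
        have := hinner j
        field_simp at this ⊢
        linarith
      have h3 : ∑ i, g i = ∑ j : Fin n, (∑ i, g i) / ((n:ℝ)+1) :=
        Finset.sum_congr rfl fun j _ => h2 j
      rw [Finset.sum_const, Finset.card_univ, Fintype.card_fin, nsmul_eq_mul] at h3
      have : (∑ i, g i) * ((n:ℝ)+1) = (∑ i, g i) * n := by
        field_simp at h3
        linarith
      nlinarith [this]
    intro j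
    have := hinner j
    rw [hGsum] at this
    have h4 : g j * (1 + 1/(n:ℝ)) = 0 := by simpa using this
    have h5 : (1 + 1/(n:ℝ)) > 0 := by positivity
    exact (mul_eq_zero.mp h4).resolve_right (ne_of_gt h5)
  -- span is everything
  have hspan : Submodule.span ℝ (Set.range p) = ⊤ := by
    apply Submodule.eq_top_of_finrank_eq
    have h1 : Submodule.span ℝ (Set.range (fun i : Fin n => p i.castSucc))
        ≤ Submodule.span ℝ (Set.range p) :=
      Submodule.span_mono (by rintro x ⟨i, rfl⟩; exact ⟨i.castSucc, rfl⟩)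
    have h2 := finrank_span_eq_card hli
    rw [Fintype.card_fin] at h2
    have h3 : Module.finrank ℝ (EuclideanSpace ℝ (Fin n)) = n := finrank_euclideanSpace_fin
    have h4 := Submodule.finrank_mono h1
    have h5 := Submodule.finrank_le (Submodule.span ℝ (Set.range p))
    omega
  have eq_of_inner : ∀ a b : EuclideanSpace ℝ (Fin n),
      (∀ j, (⟪a - b, p j⟫:ℝ) = 0) → a = b := by
    intro a b h
    have hmem : a - b ∈ (Submodule.span ℝ (Set.range p))ᗮ := by
      rw [Submodule.mem_orthogonal']
      intro y hy
      induction hy using Submodule.span_induction with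
      | mem y hy => obtain ⟨j, rfl⟩ := hy; exact h j
      | zero => simp
      | add y z _ _ hy hz => rw [inner_add_right, hy, hz]; norm_num
      | smul c y _ hy => rw [real_inner_smul_right, hy]; ring
    rw [hspan, Submodule.top_orthogonal_eq_bot, Submodule.mem_bot, sub_eq_zero] at hmem
    exact hmem
  have key : ∀ a : EuclideanSpace ℝ (Fin n),
      a = ∑ i, ((n:ℝ)/((n:ℝ)+1) * ⟪a, p i⟫) • p i := by
    intro a
    apply eq_of_inner
    intro j
    rw [inner_sub_left, core]
    have h1 : ∑ i, (n:ℝ)/((n:ℝ)+1) * ⟪a, p i⟫ = 0 := by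
      rw [← Finset.mul_sum, tsum0 a, mul_zero]
    rw [h1]
    field_simp
    ring
  -- hull bound
  have hullB : ∀ (v : EuclideanSpace ℝ (Fin n)) (M : ℝ),
      (∀ i, (⟪v, p i⟫:ℝ) ≤ M) → ∀ x ∈ S, (⟪v, x⟫:ℝ) ≤ M := by
    intro v M hv x hx
    rw [hS] at hx
    have hlin : IsLinearMap ℝ (fun x : EuclideanSpace ℝ (Fin n) => (⟪v, x⟫:ℝ)) :=
      ⟨fun x y => inner_add_right v x y, fun r x => real_inner_smul_right v x r⟩
    have hconv : Convex ℝ {x : EuclideanSpace ℝ (Fin n) | (⟪v, x⟫:ℝ) ≤ M} :=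
      convex_halfSpace_le hlin M
    exact convexHull_min (by rintro _ ⟨i, rfl⟩; exact hv i) hconv hx
  -- membership in S from convex combinations
  have memS : ∀ (w : Fin (n+1) → ℝ), (∀ i, 0 ≤ w i) → ∑ i, w i = 1 →
      (∑ i, w i • p i) ∈ S := by
    intro w hw0 hw1
    rw [hS, ← Finset.centerMass_eq_of_sum_1 _ _ hw1]
    exact Finset.centerMass_mem_convexHull _ (fun i _ => hw0 i) (by rw [hw1]; norm_num)
      (fun i _ => ⟨i, rfl⟩)
  have pmem : ∀ i, p i ∈ S := fun i => by
    rw [hS]; exact subset_convexHull ℝ _ ⟨i, rfl⟩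
  -- vertices of the polar
  have hQmem : ∀ j, (-(n:ℝ)) • p j ∈ polarSet S := by
    intro j
    simp only [polarSet, Set.mem_setOf_eq]
    intro x hx
    refine hullB _ 1 (fun i => ?_) x hx
    rw [real_inner_smul_left]
    by_cases h : j = i
    · subst h; rw [hii]; linarith
    · rw [hip j i h]
      have : -(n:ℝ) * (-1/(n:ℝ)) = 1 := by field_simp
      rw [this]
  -- range bound for members of K
  have hKrange : ∀ a, a ∈ polarSet ((2:ℝ)⁻¹ • (polarSet S + -polarSet S)) →
      ∀ i j, (⟪a, p i⟫:ℝ) - ⟪a, p j⟫ ≤ 2/(n:ℝ) := by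
    intro a ha i j
    have hmem : (2:ℝ)⁻¹ • ((-(n:ℝ)) • p j + (n:ℝ) • p i)
        ∈ (2:ℝ)⁻¹ • (polarSet S + -polarSet S) := by
      apply Set.smul_mem_smul_set
      apply Set.add_mem_add (hQmem j)
      rw [Set.mem_neg, ← neg_smul]
      exact hQmem i
    have h1 := ha _ hmem
    rw [real_inner_smul_right, inner_add_right, real_inner_smul_right,
      real_inner_smul_right] at h1
    rw [le_div_iff₀ hnR]
    nlinarith [h1]
  constructor
  -- ===================== containment =========================
  · intro a ha
    have hcomb : ∑ i, max (⟪a, p i⟫:ℝ) 0 ≤ ((n:ℝ)+2)/(2*((n:ℝ)+1)) :=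
      aux_comb_bound hn hn0 (fun i => (⟪a, p i⟫:ℝ)) (tsum0 a)
        (fun i j => hKrange a ha i j)
    set c : ℝ := (n:ℝ) * ((n:ℝ) + 2) / ((n:ℝ) + 1)^2 with hc
    have hcpos : (0:ℝ) < c := by rw [hc]; positivity
    have hcne : c ≠ 0 := ne_of_gt hcpos
    set r : ℝ := 2/c * ((n:ℝ)/((n:ℝ)+1)) with hr
    have hr0 : (0:ℝ) ≤ r := by rw [hr]; positivity
    set ν : Fin (n+1) → ℝ := fun i => r * (⟪a, p i⟫:ℝ) with hν
    have hmax : ∀ i, max (ν i) 0 = r * max (⟪a, p i⟫:ℝ) 0 := by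
      intro i
      show max (r * (⟪a, p i⟫:ℝ)) 0 = r * max (⟪a, p i⟫:ℝ) 0
      rw [mul_max_of_nonneg _ _ hr0, mul_zero]
    have hνsum : ∑ i, max (ν i) 0 ≤ 1 := by
      calc ∑ i, max (ν i) 0 = r * ∑ i, max (⟪a, p i⟫:ℝ) 0 := by
            simp_rw [hmax]; rw [Finset.mul_sum]
        _ ≤ r * (((n:ℝ)+2)/(2*((n:ℝ)+1))) := mul_le_mul_of_nonneg_left hcomb hr0
        _ = 1 := by rw [hr, hc]; field_simp
    have hνtot : ∑ i, ν i = 0 := by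
      show ∑ i, r * (⟪a, p i⟫:ℝ) = 0
      rw [← Finset.mul_sum, tsum0 a, mul_zero]
    set δ : ℝ := (1 - ∑ i, max (ν i) 0)/((n:ℝ)+1) with hδ
    have hδ0 : (0:ℝ) ≤ δ := by
      rw [hδ]; apply div_nonneg; linarith; linarith
    have hwx : ∑ i, (max (ν i) 0 + δ) = 1 := by
      rw [Finset.sum_add_distrib, Finset.sum_const, Finset.card_univ, Fintype.card_fin,
        nsmul_eq_mul, hδ]
      push_cast
      field_simp
      ring
    have hx : (∑ i, (max (ν i) 0 + δ) • p i) ∈ S :=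
      memS _ (fun i => add_nonneg (le_max_right _ _) hδ0) hwx
    have hmaxneg : ∀ i, max (-ν i) 0 = max (ν i) 0 - ν i := by
      intro i
      rcases le_total (ν i) 0 with h | h
      · rw [max_eq_left (by linarith), max_eq_right h]; ring
      · rw [max_eq_right (by linarith), max_eq_left h]; ring
    have hwy : ∑ i, (max (-ν i) 0 + δ) = 1 := by
      simp_rw [hmaxneg]
      rw [Finset.sum_add_distrib, Finset.sum_sub_distrib, hνtot, sub_zero,
        Finset.sum_const, Finset.card_univ, Fintype.card_fin, nsmul_eq_mul, hδ]
      push_cast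
      field_simp
      ring
    have hy : (∑ i, (max (-ν i) 0 + δ) • p i) ∈ S :=
      memS _ (fun i => add_nonneg (le_max_right _ _) hδ0) hwy
    rw [Set.mem_smul_set]
    refine ⟨(2:ℝ)⁻¹ • ((∑ i, (max (ν i) 0 + δ) • p i) + -(∑ i, (max (-ν i) 0 + δ) • p i)),
      Set.smul_mem_smul_set (Set.add_mem_add hx (Set.mem_neg.mpr (by rwa [neg_neg]))), ?_⟩
    have hsub2 : (∑ i, (max (ν i) 0 + δ) • p i) + -(∑ i, (max (-ν i) 0 + δ) • p i)
        = ∑ i, ν i • p i := by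
      rw [← sub_eq_add_neg, ← Finset.sum_sub_distrib]
      refine Finset.sum_congr rfl fun i _ => ?_
      rw [← sub_smul]
      congr 1
      rw [hmaxneg i]; ring
    rw [hsub2, Finset.smul_sum, Finset.smul_sum]
    have hterm : ∀ i ∈ Finset.univ, c • ((2:ℝ)⁻¹ • (ν i • p i))
        = ((n:ℝ)/((n:ℝ)+1) * ⟪a, p i⟫) • p i := by
      intro i _
      rw [smul_smul, smul_smul]
      congr 1
      simp only [hν]
      rw [hr]
      field_simp
    rw [Finset.sum_congr rfl hterm]
    exact (key a).symm
  -- ===================== optimality =========================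
  · rintro ⟨ρ, hρ0, hρ1, t0, hsubset⟩
    obtain ⟨k, hk2⟩ := hn
    have hkR : ((k:ℝ)) = (n:ℝ)/2 := by
      have : ((n:ℕ):ℝ) = ((k:ℝ) + (k:ℝ)) := by rw [hk2]; push_cast; ring
      linarith
    set c : ℝ := (n:ℝ) * ((n:ℝ) + 2) / ((n:ℝ) + 1)^2 with hc
    have hcpos : (0:ℝ) < c := by rw [hc]; positivity
    have hcne : c ≠ 0 := ne_of_gt hcpos
    set μ : Fin (n+1) → ℝ := fun i =>
      if (i:ℕ) < k then ((n:ℝ)+2)/(((n:ℝ)+1)^2) else -(n:ℝ)/(((n:ℝ)+1)^2) with hμ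
    set w : Fin (n+1) → ℝ := fun i =>
      if (i:ℕ) < k then 1/c + 1/(c*((n:ℝ)+1)) else -(1/c) + 1/(c*((n:ℝ)+1)) with hw
    have hsum_if : ∀ x y : ℝ, ∑ i : Fin (n+1), (if (i:ℕ) < k then x else y)
        = (k:ℝ) * x + ((k:ℝ)+1) * y := by
      intro x y
      rw [Fin.sum_univ_eq_sum_range (fun j => if j < k then x else y) (n+1)]
      rw [Finset.sum_ite]
      have h1 : Finset.filter (fun j => j < k) (Finset.range (n+1)) = Finset.range k := by
        ext j; simp only [Finset.mem_filter, Finset.mem_range]; omega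
      have h2 : (Finset.filter (fun j => ¬ j < k) (Finset.range (n+1))).card = k+1 := by
        have h := Finset.card_filter_add_card_filter_not
          (s := Finset.range (n+1)) (p := fun j => j < k)
        rw [h1] at h
        simp only [Finset.card_range] at h
        omega
      rw [h1, Finset.sum_const, Finset.sum_const, Finset.card_range, h2,
        nsmul_eq_mul, nsmul_eq_mul]
      push_cast
      ring
    have hμsum : ∑ i, μ i = 0 := by
      have h := hsum_if (((n:ℝ)+2)/(((n:ℝ)+1)^2)) (-(n:ℝ)/(((n:ℝ)+1)^2))
      rw [show (∑ i, μ i) = ∑ i : Fin (n+1), (if (i:ℕ) < k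
        then ((n:ℝ)+2)/(((n:ℝ)+1)^2) else -(n:ℝ)/(((n:ℝ)+1)^2)) from by rw [hμ], h, hkR]
      field_simp
      try ring
    have hwsum : ∑ i, w i = 0 := by
      have h := hsum_if (1/c + 1/(c*((n:ℝ)+1))) (-(1/c) + 1/(c*((n:ℝ)+1)))
      rw [show (∑ i, w i) = ∑ i : Fin (n+1), (if (i:ℕ) < k
        then 1/c + 1/(c*((n:ℝ)+1)) else -(1/c) + 1/(c*((n:ℝ)+1))) from by rw [hw], h, hkR]
      field_simp
      try ring
    set a : EuclideanSpace ℝ (Fin n) := ∑ i, μ i • p i with ha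
    set u : EuclideanSpace ℝ (Fin n) := ∑ i, (((n:ℝ)/((n:ℝ)+1)) * w i) • p i with hu
    have huinner : ∀ j, (⟪u, p j⟫:ℝ) = w j := by
      intro j
      rw [hu, core]
      rw [← Finset.mul_sum, hwsum, mul_zero, zero_div, sub_zero]
      field_simp
      try ring
    -- a belongs to K
    have haK : a ∈ polarSet ((2:ℝ)⁻¹ • (polarSet S + -polarSet S)) := by
      simp only [polarSet, Set.mem_setOf_eq]
      intro x hx
      rw [Set.mem_smul_set] at hx; obtain ⟨y, hy, rfl⟩ := hx
      rw [Set.mem_add] at hy; obtain ⟨q1, hq1, q2, hq2, rfl⟩ := hy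
      rw [Set.mem_neg] at hq2
      have hs1 : ∀ i, (⟪q1, p i⟫:ℝ) ≤ 1 := fun i => hq1 _ (pmem i)
      have hs2 : ∀ i, (⟪-q2, p i⟫:ℝ) ≤ 1 := fun i => hq2 _ (pmem i)
      have hsum1 : ∑ i, (⟪q1, p i⟫:ℝ) = 0 := tsum0 q1
      have hsum2 : ∑ i, (⟪-q2, p i⟫:ℝ) = 0 := tsum0 (-q2)
      have hμlow : ∀ i, (0:ℝ) ≤ μ i + (n:ℝ)/(((n:ℝ)+1)^2) := by
        intro i
        by_cases h : (i:ℕ) < k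
        · rw [show μ i = ((n:ℝ)+2)/(((n:ℝ)+1)^2) from by simp [hμ, h]]
          positivity
        · rw [show μ i = -(n:ℝ)/(((n:ℝ)+1)^2) from by simp [hμ, h]]
          rw [neg_div]
          linarith
      have hμhigh : ∀ i, (0:ℝ) ≤ ((n:ℝ)+2)/(((n:ℝ)+1)^2) - μ i := by
        intro i
        by_cases h : (i:ℕ) < k
        · rw [show μ i = ((n:ℝ)+2)/(((n:ℝ)+1)^2) from by simp [hμ, h]]
          linarith
        · rw [show μ i = -(n:ℝ)/(((n:ℝ)+1)^2) from by simp [hμ, h]]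
          rw [neg_div]
          have h1 : (0:ℝ) ≤ ((n:ℝ)+2)/(((n:ℝ)+1)^2) := by positivity
          have h2 : (0:ℝ) ≤ (n:ℝ)/(((n:ℝ)+1)^2) := by positivity
          linarith
      have hb1 : (⟪a, q1⟫:ℝ) ≤ (n:ℝ)/((n:ℝ)+1) := by
        rw [ha, sum_inner]
        have hterm : ∀ i : Fin (n+1), (⟪μ i • p i, q1⟫:ℝ) = μ i * ⟪q1, p i⟫ := by
          intro i; rw [real_inner_smul_left, real_inner_comm]
        simp_rw [hterm]
        have hstep : ∀ i ∈ Finset.univ, μ i * (⟪q1, p i⟫:ℝ)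
            ≤ (μ i + (n:ℝ)/(((n:ℝ)+1)^2)) - (n:ℝ)/(((n:ℝ)+1)^2) * ⟪q1, p i⟫ := by
          intro i _
          nlinarith [hs1 i, hμlow i]
        calc ∑ i, μ i * (⟪q1, p i⟫:ℝ)
            ≤ ∑ i, ((μ i + (n:ℝ)/(((n:ℝ)+1)^2)) - (n:ℝ)/(((n:ℝ)+1)^2) * ⟪q1, p i⟫) :=
              Finset.sum_le_sum hstep
          _ = ∑ i, μ i + ((n:ℝ)+1) * ((n:ℝ)/(((n:ℝ)+1)^2))
              - (n:ℝ)/(((n:ℝ)+1)^2) * ∑ i, (⟪q1, p i⟫:ℝ) := by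
              rw [Finset.sum_sub_distrib, Finset.sum_add_distrib, Finset.sum_const,
                Finset.card_univ, Fintype.card_fin, nsmul_eq_mul, ← Finset.mul_sum]
              push_cast
              ring
          _ = (n:ℝ)/((n:ℝ)+1) := by
              rw [hμsum, hsum1]
              field_simp
              ring
      have hb2 : (⟪a, q2⟫:ℝ) ≤ ((n:ℝ)+2)/((n:ℝ)+1) := by
        rw [ha, sum_inner]
        have hterm : ∀ i : Fin (n+1), (⟪μ i • p i, q2⟫:ℝ) = -(μ i * ⟪-q2, p i⟫) := by
          intro i
          rw [real_inner_smul_left, real_inner_comm, inner_neg_left]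
          ring
        simp_rw [hterm]
        have hstep : ∀ i ∈ Finset.univ, -(μ i * (⟪-q2, p i⟫:ℝ))
            ≤ (((n:ℝ)+2)/(((n:ℝ)+1)^2) - μ i)
              - (((n:ℝ)+2)/(((n:ℝ)+1)^2)) * ⟪-q2, p i⟫ := by
          intro i _
          nlinarith [hs2 i, hμhigh i]
        calc ∑ i, -(μ i * (⟪-q2, p i⟫:ℝ))
            ≤ ∑ i, ((((n:ℝ)+2)/(((n:ℝ)+1)^2) - μ i)
              - (((n:ℝ)+2)/(((n:ℝ)+1)^2)) * ⟪-q2, p i⟫) :=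
              Finset.sum_le_sum hstep
          _ = ((n:ℝ)+1) * (((n:ℝ)+2)/(((n:ℝ)+1)^2)) - ∑ i, μ i
              - (((n:ℝ)+2)/(((n:ℝ)+1)^2)) * ∑ i, (⟪-q2, p i⟫:ℝ) := by
              rw [Finset.sum_sub_distrib, Finset.sum_sub_distrib, Finset.sum_const,
                Finset.card_univ, Fintype.card_fin, nsmul_eq_mul, ← Finset.mul_sum]
              push_cast
              ring
          _ = ((n:ℝ)+2)/((n:ℝ)+1) := by
              rw [hμsum, hsum2]
              field_simp
              ring
      rw [real_inner_smul_right, inner_add_right]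
      have hsum12 : (n:ℝ)/((n:ℝ)+1) + ((n:ℝ)+2)/((n:ℝ)+1) = 2 := by
        field_simp
        ring
      nlinarith [hb1, hb2]
    -- u is in the polar of the body C
    have hupolar : ∀ z ∈ c • ((2:ℝ)⁻¹ • (S + -S)), (⟪u, z⟫:ℝ) ≤ 1 := by
      intro z hz
      rw [Set.mem_smul_set] at hz; obtain ⟨y, hy, rfl⟩ := hz
      rw [Set.mem_smul_set] at hy; obtain ⟨y2, hy2, rfl⟩ := hy
      rw [Set.mem_add] at hy2; obtain ⟨x1, hx1, x2, hx2, rfl⟩ := hy2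
      rw [Set.mem_neg] at hx2
      have h1 : (⟪u, x1⟫:ℝ) ≤ 1/c + 1/(c*((n:ℝ)+1)) := by
        refine hullB u _ (fun i => ?_) x1 hx1
        rw [huinner i]
        by_cases h : (i:ℕ) < k
        · rw [show w i = 1/c + 1/(c*((n:ℝ)+1)) from by simp [hw, h]]
        · rw [show w i = -(1/c) + 1/(c*((n:ℝ)+1)) from by simp [hw, h]]
          have h3 : (0:ℝ) < 1/c := by positivity
          linarith
      have h2 : (⟪u, x2⟫:ℝ) ≤ 1/c - 1/(c*((n:ℝ)+1)) := by
        rw [← inner_neg_neg]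
        refine hullB (-u) _ (fun i => ?_) (-x2) hx2
        rw [inner_neg_left, huinner i]
        by_cases h : (i:ℕ) < k
        · rw [show w i = 1/c + 1/(c*((n:ℝ)+1)) from by simp [hw, h]]
          have h3 : (0:ℝ) < 1/c := by positivity
          linarith
        · rw [show w i = -(1/c) + 1/(c*((n:ℝ)+1)) from by simp [hw, h]]
          linarith
      rw [real_inner_smul_right, real_inner_smul_right, inner_add_right]
      have h2c : (2:ℝ)/c = 1/c + 1/c := by ring
      have hle : (⟪u, x1⟫:ℝ) + ⟪u, x2⟫ ≤ 2/c := by rw [h2c]; linarith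
      calc c * (2⁻¹ * ((⟪u, x1⟫:ℝ) + ⟪u, x2⟫)) ≤ c * (2⁻¹ * (2/c)) := by
            apply mul_le_mul_of_nonneg_left _ (le_of_lt hcpos)
            apply mul_le_mul_of_nonneg_left hle (by norm_num)
        _ = 1 := by field_simp
    -- the certificate value
    have hua : (⟪u, a⟫:ℝ) = 1 := by
      rw [ha, inner_sum]
      have hterm : ∀ i : Fin (n+1), (⟪u, μ i • p i⟫:ℝ) = μ i * w i := by
        intro i; rw [real_inner_smul_right, huinner i]
      simp_rw [hterm]
      have hpw : ∀ i : Fin (n+1), μ i * w i = (if (i:ℕ) < k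
          then (((n:ℝ)+2)/(((n:ℝ)+1)^2)) * (1/c + 1/(c*((n:ℝ)+1)))
          else (-(n:ℝ)/(((n:ℝ)+1)^2)) * (-(1/c) + 1/(c*((n:ℝ)+1)))) := by
        intro i; by_cases h : (i:ℕ) < k <;> simp [hμ, hw, h]
      simp_rw [hpw]
      rw [hsum_if, hkR, hc]
      field_simp
      ring
    -- -a is also in K
    have hKsymm : -a ∈ polarSet ((2:ℝ)⁻¹ • (polarSet S + -polarSet S)) := by
      simp only [polarSet, Set.mem_setOf_eq]
      intro x hx
      have hx' : -x ∈ (2:ℝ)⁻¹ • (polarSet S + -polarSet S) := by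
        rw [Set.mem_smul_set] at hx ⊢
        obtain ⟨y, hy, rfl⟩ := hx
        rw [Set.mem_add] at hy
        obtain ⟨q1, hq1, q2, hq2, rfl⟩ := hy
        refine ⟨-q2 + -q1, ?_, ?_⟩
        · rw [Set.mem_add]
          exact ⟨-q2, Set.mem_neg.mp hq2, -q1, Set.mem_neg.mpr (by rwa [neg_neg]), rfl⟩
        · module
      have h1 := haK _ hx'
      rw [inner_neg_right] at h1
      rw [inner_neg_left]
      linarith
    -- derive the contradiction
    have hmem1 := hsubset haK
    have hmem2 := hsubset hKsymm
    rw [Set.mem_add] at hmem1 hmem2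
    obtain ⟨b1, hb1, s1, hs1', heq1⟩ := hmem1
    obtain ⟨b2, hb2, s2, hs2', heq2⟩ := hmem2
    rw [Set.mem_singleton_iff] at hs1' hs2'
    rw [hs1'] at heq1
    rw [hs2'] at heq2
    rw [Set.mem_smul_set] at hb1 hb2
    obtain ⟨z1, hz1, rfl⟩ := hb1
    obtain ⟨z2, hz2, rfl⟩ := hb2
    have hSconv : Convex ℝ S := hS ▸ convex_convexHull ℝ _
    have hCconv : Convex ℝ (c • ((2:ℝ)⁻¹ • (S + -S))) :=
      ((hSconv.add hSconv.neg).smul _).smul _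
    have hz2' : -z2 ∈ c • ((2:ℝ)⁻¹ • (S + -S)) := by
      rw [Set.mem_smul_set] at hz2 ⊢
      obtain ⟨y, hy, rfl⟩ := hz2
      rw [Set.mem_smul_set] at hy
      obtain ⟨y2, hy2, rfl⟩ := hy
      rw [Set.mem_add] at hy2
      obtain ⟨x1, hx1, x2, hx2, rfl⟩ := hy2
      rw [Set.mem_neg] at hx2
      refine ⟨(2:ℝ)⁻¹ • (-x2 + -x1), ⟨-x2 + -x1, ?_, rfl⟩, ?_⟩
      · rw [Set.mem_add]
        exact ⟨-x2, hx2, -x1, Set.mem_neg.mpr (by rwa [neg_neg]), rfl⟩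
      · module
    have hmid : (2:ℝ)⁻¹ • z1 + (2:ℝ)⁻¹ • (-z2) ∈ c • ((2:ℝ)⁻¹ • (S + -S)) :=
      hCconv hz1 hz2' (by norm_num) (by norm_num) (by norm_num)
    have hz : a = ρ • ((2:ℝ)⁻¹ • z1 + (2:ℝ)⁻¹ • (-z2)) := by
      have h3 : ρ • z1 - ρ • z2 = a - (-a) := by
        rw [← heq2, ← heq1]; abel
      calc a = (2:ℝ)⁻¹ • (a - (-a)) := by module
        _ = (2:ℝ)⁻¹ • (ρ • z1 - ρ • z2) := by rw [h3]
        _ = ρ • ((2:ℝ)⁻¹ • z1 + (2:ℝ)⁻¹ • (-z2)) := by module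
    have hfin1 : (1:ℝ) = ρ * ⟪u, (2:ℝ)⁻¹ • z1 + (2:ℝ)⁻¹ • (-z2)⟫ := by
      rw [← hua, hz, real_inner_smul_right]
    have hfin2 := hupolar _ hmid
    nlinarith [hfin1, hfin2, hρ0, hρ1,
      mul_le_mul_of_nonneg_left hfin2 hρ0]
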